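/- With the sl₂ bracket [·,·]₀ on V = K³ and a linear map α₁ with matrix (a_{ij}), the triple (V, [·,·]₀, α₁) is a Hom–Lie algebra (i.e., the Hom–Jacobi identity Σ_cyc [α₁(x),[y,z]₀]₀ = 0 holds for all x,y,z ∈ V) if and only if a₂₂ = a₃₃, a₂₁ = 2a₁₃, and a₃₁ = 2a₁₂. -/

import Mathlib

def br0 {K : Type*} [CommRing K] (u v : Fin 3 → K) : Fin 3 → K :=
  ![u 1 * v 2 - u 2 * v 1,
    2 * (u 0 * v 1 - u 1 * v 0),
    -2 * (u 0 * v 2 - u 2 * v 0)]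

def matMap {K : Type*} [CommRing K] (a : Fin 3 → Fin 3 → K) (v : Fin 3 → K) :
    Fin 3 → K := fun i => ∑ j, a i j * v j

theorem stmt2 {K : Type*} [Field K] [CharZero K] (a : Fin 3 → Fin 3 → K) :
    (∀ x y z : Fin 3 → K,
        br0 (matMap a x) (br0 y z) + br0 (matMap a y) (br0 z x)
          + br0 (matMap a z) (br0 x y) = 0)
    ↔ (a 1 1 = a 2 2 ∧ a 1 0 = 2 * a 0 2 ∧ a 2 0 = 2 * a 0 1) := by
  constructor
  · intro h
    have h1 := congrFun (h ![1,0,0] ![0,1,0] ![0,0,1]) 0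
    have h2 := congrFun (h ![1,0,0] ![0,1,0] ![0,0,1]) 1
    have h3 := congrFun (h ![1,0,0] ![0,1,0] ![0,0,1]) 2
    simp [br0, matMap, Fin.sum_univ_three] at h1 h2 h3
    refine ⟨by linear_combination h1 / 2, by linear_combination -h2 / 2,
      by linear_combination h3 / 2⟩
  · rintro ⟨h1, h2, h3⟩ x y z
    funext i
    fin_cases i <;>
      [(show br0 _ _ 0 + br0 _ _ 0 + br0 _ _ 0 = (0 : K));
       (show br0 _ _ 1 + br0 _ _ 1 + br0 _ _ 1 = (0 : K));
       (show br0 _ _ 2 + br0 _ _ 2 + br0 _ _ 2 = (0 : K))] <;>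
      simp [br0, matMap, Fin.sum_univ_three] <;>
      simp only [h1, h2, h3] <;> ring
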